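/- arXiv:2502.12286 — 6 statements merged into one kernel-verified Lean document; each statement's English description precedes it below -/
import Mathlib

section
/- The formula ⟨⟨C⟩⟩^r□p → ⟨⟨C⟩⟩○⟨⟨C⟩⟩^r□p is not valid over the class of all CGSPs: there exists a CGSP P and a state w such that coalition C has a rational strategy from w guaranteeing p always in the future, yet C has no strategy from w guaranteeing that from every successor C again has a rational strategy guaranteeing p always. -/
universe u v

variable {n : ℕ} {W : Type} {Act : Type}

/-- A concurrent game structure (CGS): transition relations for joint actions,
satisfying collective choice determinism (C1), independence of choices (C2),
and seriality / neverending interaction (C3). -/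
structure CGS (n : ℕ) (W Act : Type) where
  R : (Fin n → Act) → W → W → Prop
  det : ∀ δ w v u, R δ w v → R δ w u → v = u
  indep : ∀ w (δ : Fin n → Act),
    (∀ i, ∃ δ' : Fin n → Act, (∃ v, R δ' w v) ∧ δ' i = δ i) → ∃ v, R δ w v
  serial : ∀ w, ∃ δ v, R δ w v

/-- The union transition relation R = ⋃_δ R_δ. -/
def CGS.Rall (M : CGS n W Act) (w v : W) : Prop := ∃ δ, M.R δ w v

/-- Agent i's choice set at state w. -/
def CGS.choice (M : CGS n W Act) (i : Fin n) (w : W) : Set Act :=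
  {a | ∃ δ : Fin n → Act, (∃ v, M.R δ w v) ∧ δ i = a}

/-- A computation (infinite full path) starting at w. -/
def Comp (M : CGS n W Act) (w : W) : Type :=
  {l : ℕ → W // l 0 = w ∧ ∀ k, M.Rall (l k) (l (k + 1))}

/-- The finite history `[l 0, …, l k]` of an infinite sequence. -/
def hist (l : ℕ → W) (k : ℕ) : List W := List.ofFn (fun j : Fin (k + 1) => l j)

/-- A perfect recall strategy of agent i: maps every finite path to an
available action at its last state. -/
def Strat (M : CGS n W Act) (i : Fin n) : Type :=
  {σ : List W → Act // ∀ (h : List W) (hne : h ≠ []),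
    List.Chain' M.Rall h → σ h ∈ M.choice i (h.getLast hne)}

/-- A collective strategy for coalition C. -/
def CStrat (M : CGS n W Act) (C : Set (Fin n)) : Type :=
  (i : Fin n) → i ∈ C → Strat M i

/-- The set of computations from w generated by collective strategy F of C. -/
def outSet (M : CGS n W Act) (C : Set (Fin n)) (w : W) (F : CStrat M C) :
    Set (Comp M w) :=
  {l | ∀ k, ∃ δ : Fin n → Act,
    (∀ i (hi : i ∈ C), (F i hi).val (hist l.val k) = δ i) ∧
    M.R δ (l.val k) (l.val (k + 1))}

/-- A CGS with preferences: a total preorder over computations starting at w,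
for each agent i and state w. -/
structure CGSP (n : ℕ) (W Act : Type) extends CGS n W Act where
  pref : (i : Fin n) → (w : W) → Comp toCGS w → Comp toCGS w → Prop
  pref_refl : ∀ i w l, pref i w l l
  pref_trans : ∀ i w l1 l2 l3, pref i w l1 l2 → pref i w l2 l3 → pref i w l1 l3
  pref_total : ∀ i w l1 l2, pref i w l1 l2 ∨ pref i w l2 l1

/-- Strict preference: l ≺_{i,w} l'. -/
def CGSP.spref (P : CGSP n W Act) (i : Fin n) (w : W)
    (l l' : Comp P.toCGS w) : Prop :=
  P.pref i w l l' ∧ ¬ P.pref i w l' l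

/-- Combine a strategy of agent i with a collective strategy of the other
agents into a grand-coalition strategy. -/
def combine (M : CGS n W Act) (i : Fin n) (s : Strat M i)
    (t : CStrat M ({i}ᶜ : Set (Fin n))) : CStrat M (Set.univ : Set (Fin n)) :=
  fun j _ =>
    if h : j = i then (by subst h; exact s)
    else t j (by simp only [Set.mem_compl_iff, Set.mem_singleton_iff]; exact h)

/-- Strategy s' dominates strategy s of agent i at w: against every collective
strategy of the remaining agents, the generated computation of s ⊕ t is
strictly below that of s' ⊕ t. -/
def Dominates (P : CGSP n W Act) (i : Fin n) (w : W)
    (s' s : Strat P.toCGS i) : Prop :=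
  ∀ t : CStrat P.toCGS ({i}ᶜ : Set (Fin n)),
    ∀ l ∈ outSet P.toCGS Set.univ w (combine P.toCGS i s t),
    ∀ l' ∈ outSet P.toCGS Set.univ w (combine P.toCGS i s' t),
      P.spref i w l l'

/-- A strategy is dominated at w if some strategy dominates it at w. -/
def Dominated (P : CGSP n W Act) (i : Fin n) (w : W)
    (s : Strat P.toCGS i) : Prop :=
  ∃ s', Dominates P i w s' s

/-- (P,w) ⊨ ⟨⟨C⟩⟩○φ. -/
def CanNext (M : CGS n W Act) (C : Set (Fin n)) (φ : W → Prop) (w : W) : Prop :=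
  ∃ F : CStrat M C, ∀ l ∈ outSet M C w F, φ (l.val 1)

/-- (P,w) ⊨ ⟨⟨C⟩⟩□φ. -/
def CanGlob (M : CGS n W Act) (C : Set (Fin n)) (φ : W → Prop) (w : W) : Prop :=
  ∃ F : CStrat M C, ∀ l ∈ outSet M C w F, ∀ k > 0, φ (l.val k)

/-- (P,w) ⊨ ⟨⟨C⟩⟩^r○φ. -/
def RatCanNext (P : CGSP n W Act) (C : Set (Fin n)) (φ : W → Prop) (w : W) :
    Prop :=
  ∃ F : CStrat P.toCGS C, (∀ i (hi : i ∈ C), ¬ Dominated P i w (F i hi)) ∧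
    ∀ l ∈ outSet P.toCGS C w F, φ (l.val 1)

/-- (P,w) ⊨ ⟨⟨C⟩⟩^r□φ. -/
def RatCanGlob (P : CGSP n W Act) (C : Set (Fin n)) (φ : W → Prop) (w : W) :
    Prop :=
  ∃ F : CStrat P.toCGS C, (∀ i (hi : i ∈ C), ¬ Dominated P i w (F i hi)) ∧
    ∀ l ∈ outSet P.toCGS C w F, ∀ k > 0, φ (l.val k)

/-- Short-sighted preferences: the preference between computations from w
depends only on their states at time 1 (indifference given equal next state). -/
def ShortSighted (P : CGSP n W Act) : Prop :=
  ∀ (i : Fin n) (w : W) (l l' : Comp P.toCGS w), l.val 1 = l'.val 1 →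
    P.pref i w l l' ∧ P.pref i w l' l

/-- Prepend a state to a sequence. -/
def prependFun (w : W) (l : ℕ → W) : ℕ → W
  | 0 => w
  | (k + 1) => l k

/-- Prepend a predecessor state w to a computation from v. -/
def Comp.prepend (M : CGS n W Act) {w v : W} (h : M.Rall w v)
    (l : Comp M v) : Comp M w :=
  ⟨prependFun w l.val, by
    refine ⟨rfl, ?_⟩
    intro k
    cases k with
    | zero =>
        show M.Rall w (l.val 0)
        rw [l.2.1]; exact h
    | succ k => exact l.2.2 k⟩

/-- Stable preferences: preferences do not change over time. -/
def Stable (P : CGSP n W Act) : Prop :=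
  ∀ (i : Fin n) (w v : W) (h : P.toCGS.Rall w v) (l l' : Comp P.toCGS v),
    P.pref i v l' l ↔
      P.pref i w (Comp.prepend P.toCGS h l') (Comp.prepend P.toCGS h l)

/-- Strict preference between successors of w, induced from preferences over
computations. -/
def sPrefSucc (P : CGSP n W Act) (i : Fin n) (w : W) (v u : W) : Prop :=
  ∃ l l' : Comp P.toCGS w, l.val 1 = v ∧ l'.val 1 = u ∧ P.spref i w l l'

/-- Action a of agent i is dominated at w: some available action a' does
strictly better against every joint action of the others (whenever both
combined joint actions are executable at w). -/
def ActionDominated (P : CGSP n W Act) [DecidableEq (Fin n)] (i : Fin n)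
    (w : W) (a : Act) : Prop :=
  ∃ a' ∈ P.toCGS.choice i w, ∀ δ : Fin n → Act, δ i = a →
    ∀ v v', P.toCGS.R δ w v → P.toCGS.R (Function.update δ i a') w v' →
      sPrefSucc P i w v v'


namespace Stmt7

/-- Deterministic transition function of the countermodel. -/
def nxt (w a : Fin 2) : Fin 2 := if w = 0 then 1 else a

lemma nxt_one (w : Fin 2) : nxt w 1 = 1 := by unfold nxt; split <;> rfl

/-- The concrete CGS. -/
def M : CGS 1 (Fin 2) (Fin 2) where
  R δ w v := v = nxt w (δ 0)
  det := by intro δ w v u hv hu; rw [hv, hu]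
  indep := by intro w δ _; exact ⟨nxt w (δ 0), rfl⟩
  serial := by intro w; exact ⟨fun _ => 0, nxt w 0, rfl⟩

lemma choice_all (i : Fin 1) (w : Fin 2) (a : Fin 2) : a ∈ M.choice i w :=
  ⟨fun _ => a, ⟨nxt w a, rfl⟩, rfl⟩

/-- Any action function is a valid strategy. -/
def mkStrat (i : Fin 1) (f : List (Fin 2) → Fin 2) : Strat M i :=
  ⟨f, fun h hne _ => choice_all i (h.getLast hne) (f h)⟩

/-- The unique play of strategy function σ from w. -/
def play (σ : List (Fin 2) → Fin 2) (w : Fin 2) : ℕ → Fin 2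
  | 0 => w
  | k + 1 => nxt (play σ w k) (σ (List.ofFn (fun j : Fin (k + 1) => play σ w j)))
  termination_by k => k
  decreasing_by · exact Nat.lt_succ_self k
                · exact j.isLt

lemma play_zero (σ : List (Fin 2) → Fin 2) (w : Fin 2) : play σ w 0 = w := by
  simp [play]

lemma play_succ (σ : List (Fin 2) → Fin 2) (w : Fin 2) (k : ℕ) :
    play σ w (k + 1) = nxt (play σ w k) (σ (hist (play σ w) k)) := by
  rw [play, hist]

/-- The play as a computation. -/
def compOf (σ : List (Fin 2) → Fin 2) (w : Fin 2) : Comp M w :=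
  ⟨play σ w, play_zero σ w, fun k => ⟨fun _ => σ (hist (play σ w) k), play_succ σ w k⟩⟩

lemma compOf_mem (F : CStrat M Set.univ) (w : Fin 2) :
    compOf (F 0 (Set.mem_univ 0)).val w ∈ outSet M Set.univ w F := by
  intro k
  refine ⟨fun _ => (F 0 (Set.mem_univ 0)).val (hist (play (F 0 (Set.mem_univ 0)).val w) k),
    ?_, play_succ _ w k⟩
  intro i hi
  have : i = 0 := Subsingleton.elim i 0
  subst this; rfl

/-- The rank predicate underlying preferences. -/
def rank : (w : Fin 2) → Comp M w → Prop
  | 0, l => ∀ k, 0 < k → l.val k = 1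
  | 1, l => l.val 1 = 0

/-- The concrete CGSP. -/
def P : CGSP 1 (Fin 2) (Fin 2) where
  toCGS := M
  pref i w l l' := rank w l → rank w l'
  pref_refl := fun _ _ _ h => h
  pref_trans := fun _ _ _ _ _ h1 h2 h => h2 (h1 h)
  pref_total := by
    intro i w l1 l2
    by_cases h : rank w l2
    · exact Or.inl fun _ => h
    · exact Or.inr fun h2 => absurd h2 h

/-- Trivial strategy of the empty coalition. -/
def tEmpty : CStrat M ({(0 : Fin 1)}ᶜ : Set (Fin 1)) := fun i hi =>
  absurd (Subsingleton.elim i 0) (by simpa using hi)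

lemma combine_val (s : Strat M 0) (t : CStrat M ({(0 : Fin 1)}ᶜ : Set (Fin 1)))
    (hi : (0 : Fin 1) ∈ (Set.univ : Set (Fin 1))) :
    combine M 0 s t 0 hi = s := by
  simp [combine]

/-- Membership in `outSet` of a `combine` for the universal coalition. -/
lemma compOf_mem_combine (s : Strat M 0) (t : CStrat M ({(0 : Fin 1)}ᶜ : Set (Fin 1)))
    (w : Fin 2) :
    compOf s.val w ∈ outSet M Set.univ w (combine M 0 s t) := by
  have h := compOf_mem (combine M 0 s t) w
  rwa [combine_val s t (Set.mem_univ 0)] at h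

/-- First step of any computation in the outset of `combine s t` from w. -/
lemma out_first (s : Strat M 0) (t : CStrat M ({(0 : Fin 1)}ᶜ : Set (Fin 1)))
    (w : Fin 2) (l : Comp M w) (hl : l ∈ outSet M Set.univ w (combine M 0 s t)) :
    l.val 1 = nxt w (s.val [w]) := by
  obtain ⟨δ, hδ, hR⟩ := hl 0
  have h0 := hδ 0 (Set.mem_univ 0)
  rw [combine_val s t (Set.mem_univ 0)] at h0
  have hh : hist l.val 0 = [w] := by
    simp [hist, List.ofFn_succ, l.2.1]
  rw [hh] at h0
  have hR' : l.val 1 = nxt (l.val 0) (δ 0) := hR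
  rw [l.2.1, ← h0] at hR'
  exact hR'

lemma rank_zero (l : Comp M 0) : rank 0 l ↔ ∀ k, 0 < k → l.val k = 1 := Iff.rfl

lemma rank_one (l : Comp M 1) : rank 1 l ↔ l.val 1 = 0 := Iff.rfl

lemma nxt_zero (a : Fin 2) : nxt 0 a = 1 := rfl

lemma nxt_one_left (a : Fin 2) : nxt 1 a = a := rfl

end Stmt7

/-- ⟨⟨C⟩⟩^r□p → ⟨⟨C⟩⟩○⟨⟨C⟩⟩^r□p is not valid: there is a CGSP,
a state, and a formula witnessing its failure. -/
theorem stmt_7 :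
    ∃ (P : CGSP 1 (Fin 2) (Fin 2)) (w : Fin 2) (φ : Fin 2 → Prop),
      RatCanGlob P Set.univ φ w ∧
      ¬ CanNext P.toCGS Set.univ (fun v => RatCanGlob P Set.univ φ v) w := by
  refine ⟨Stmt7.P, 0, fun v => v = 1, ?_, ?_⟩
  · -- Part 1: RatCanGlob at 0
    refine ⟨fun i _ => Stmt7.mkStrat i (fun _ => 1), ?_, ?_⟩
    · intro i hi hdom
      have h0 : i = 0 := Subsingleton.elim i 0
      subst h0
      obtain ⟨s', hdom⟩ := hdom
      have hsp := hdom Stmt7.tEmpty _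
        (Stmt7.compOf_mem_combine (Stmt7.mkStrat 0 (fun _ => 1)) Stmt7.tEmpty 0) _
        (Stmt7.compOf_mem_combine s' Stmt7.tEmpty 0)
      apply hsp.2
      intro _
      rw [Stmt7.rank_zero]
      intro k hk
      obtain ⟨j, rfl⟩ := Nat.exists_eq_add_of_lt hk
      show Stmt7.play (fun _ => 1) 0 (0 + j + 1) = 1
      rw [Stmt7.play_succ]
      exact Stmt7.nxt_one _
    · intro l hl k hk
      obtain ⟨j, rfl⟩ := Nat.exists_eq_add_of_lt hk
      obtain ⟨δ, hδ, hR⟩ := hl (0 + j)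
      have h1 : (1 : Fin 2) = δ 0 := hδ 0 (Set.mem_univ 0)
      have hR' : l.val (0 + j + 1) = Stmt7.nxt (l.val (0 + j)) (δ 0) := hR
      rw [← h1, Stmt7.nxt_one] at hR'
      exact hR'
  · -- Part 2: ¬ CanNext
    rintro ⟨F, hF⟩
    have hl := Stmt7.compOf_mem F 0
    have h1 := hF _ hl
    have hv1 : (Stmt7.compOf (F 0 (Set.mem_univ 0)).val 0).val 1 = 1 := by
      show Stmt7.play _ 0 (0 + 1) = 1
      rw [Stmt7.play_succ, Stmt7.play_zero, Stmt7.nxt_zero]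
    rw [hv1] at h1
    obtain ⟨G, hrat, hglob⟩ := h1
    have hm := Stmt7.compOf_mem G 1
    have hg := hglob _ hm 1 one_pos
    have hs1 : (G 0 (Set.mem_univ 0)).val [1] = 1 := by
      have : Stmt7.play (G 0 (Set.mem_univ 0)).val 1 (0 + 1) = 1 := hg
      rw [Stmt7.play_succ, Stmt7.play_zero, Stmt7.nxt_one_left] at this
      have hh : hist (Stmt7.play (G 0 (Set.mem_univ 0)).val 1) 0 = [1] := by
        simp [hist, List.ofFn_succ, Stmt7.play_zero]
      rw [hh] at this
      exact this
    apply hrat 0 (Set.mem_univ 0)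
    refine ⟨Stmt7.mkStrat 0 (fun _ => 0), ?_⟩
    intro t l hls l' hls'
    have hL : l.val 1 = 1 := by
      rw [Stmt7.out_first _ t 1 l hls, hs1, Stmt7.nxt_one]
    have hL' : l'.val 1 = 0 := by
      rw [Stmt7.out_first _ t 1 l' hls']
      rfl
    constructor
    · intro hr
      replace hr : l.val 1 = 0 := hr
      rw [hL] at hr
      exact absurd hr (by decide)
    · intro hp
      have hr := hp ((Stmt7.rank_one l').mpr hL')
      replace hr : l.val 1 = 0 := hr
      rw [hL] at hr
      exact absurd hr (by decide)
end

section
/- The formula ¬⟨⟨∅⟩⟩^r○¬φ → ⟨⟨AGT⟩⟩^r○φ is not valid over the class of all CGSPs: there exist a CGSP P, a state w, and a formula φ such that it is not the case that the empty coalition can rationally ensure ¬φ next, yet the grand coalition has no rational strategy ensuring φ next. -/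
universe u v

variable {n : ℕ} {W : Type} {Act : Type}

namespace Stmt8Aux

/-- Deterministic transition: from state 0 everything loops at 0; from state 1
action a leads to state a. -/
def step (w a : Fin 2) : Fin 2 := if w = 0 then 0 else a

def M : CGS 1 (Fin 2) (Fin 2) where
  R δ w v := v = step w (δ 0)
  det := by intro δ w v u hv hu; rw [hv, hu]
  indep := by intro w δ _; exact ⟨_, rfl⟩
  serial := by intro w; exact ⟨fun _ => 0, _, rfl⟩

/-- Preferences: at state 1 the agent strictly prefers going to 0. -/
def P : CGSP 1 (Fin 2) (Fin 2) where
  toCGS := M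
  pref _ w l l' := (if w = 1 ∧ l.val 1 = 0 then 1 else 0 : ℕ) ≤
    (if w = 1 ∧ l'.val 1 = 0 then 1 else 0 : ℕ)
  pref_refl := by intros; exact le_refl _
  pref_trans := by intro i w l1 l2 l3 h1 h2; exact le_trans h1 h2
  pref_total := by intro i w l1 l2; exact le_total _ _

lemma hist_succ (l : ℕ → Fin 2) (k : ℕ) :
    hist l (k + 1) = hist l k ++ [l (k + 1)] := by
  rw [hist, List.ofFn_succ', List.concat_eq_append]
  rfl

/-- History + last state of the unique play following strategy σ from w. -/
def HsP (σ : List (Fin 2) → Fin 2) (w : Fin 2) : ℕ → List (Fin 2) × Fin 2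
  | 0 => ([w], w)
  | k + 1 =>
    let p := HsP σ w k
    let x := step p.2 (σ p.1)
    (p.1 ++ [x], x)

def seqF (σ : List (Fin 2) → Fin 2) (w : Fin 2) (k : ℕ) : Fin 2 :=
  (HsP σ w k).2

lemma hist_seqF (σ : List (Fin 2) → Fin 2) (w : Fin 2) (k : ℕ) :
    hist (seqF σ w) k = (HsP σ w k).1 := by
  induction k with
  | zero => simp [hist, seqF, HsP]
  | succ k ih =>
      rw [hist_succ, ih]
      show _ = (HsP σ w k).1 ++ [step (HsP σ w k).2 (σ (HsP σ w k).1)]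
      rfl

lemma seqF_succ (σ : List (Fin 2) → Fin 2) (w : Fin 2) (k : ℕ) :
    seqF σ w (k + 1) = step (seqF σ w k) (σ (hist (seqF σ w) k)) := by
  rw [hist_seqF]; rfl

lemma seqF_comp (σ : List (Fin 2) → Fin 2) (w : Fin 2) :
    seqF σ w 0 = w ∧ ∀ k, M.Rall (seqF σ w k) (seqF σ w (k + 1)) := by
  refine ⟨rfl, fun k => ⟨fun _ => σ (hist (seqF σ w) k), ?_⟩⟩
  show seqF σ w (k + 1) = step (seqF σ w k) (σ (hist (seqF σ w) k))
  exact seqF_succ σ w k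

/-- The always-0 strategy. -/
def s0 : Strat M 0 :=
  ⟨fun _ => 0, fun h hne _ => ⟨fun _ => 0, ⟨_, rfl⟩, rfl⟩⟩

end Stmt8Aux

/-- ¬⟨⟨∅⟩⟩^r○¬φ → ⟨⟨AGT⟩⟩^r○φ is not valid over all CGSPs. -/
theorem stmt_8 :
    ∃ (P : CGSP 1 (Fin 2) (Fin 2)) (w : Fin 2) (φ : Fin 2 → Prop),
      ¬ RatCanNext P ∅ (fun v => ¬ φ v) w ∧
      ¬ RatCanNext P Set.univ φ w := by
  classical
  refine ⟨Stmt8Aux.P, 1, fun v => v = 1, ?_, ?_⟩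
  · rintro ⟨F, -, hout⟩
    have hR11 : Stmt8Aux.M.R (fun _ => 1) 1 1 := by
      show (1 : Fin 2) = Stmt8Aux.step 1 1
      decide
    have hl : (⟨fun _ => 1, rfl, fun _ => ⟨fun _ => 1, hR11⟩⟩ :
        Comp Stmt8Aux.P.toCGS 1) ∈ outSet Stmt8Aux.P.toCGS ∅ 1 F := by
      intro k
      exact ⟨fun _ => 1, fun i hi => absurd hi (Set.notMem_empty i), hR11⟩
    exact hout _ hl rfl
  · rintro ⟨F, hnd, hout⟩
    set σ := (F 0 (Set.mem_univ 0)).val with hσ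
    have hist0 : ∀ (l : ℕ → Fin 2), l 0 = 1 → hist l 0 = [1] := by
      intro l h0; simp [hist, h0]
    by_cases ha : σ [1] = 0
    · -- the unique outcome of F goes to 0 at step 1, where φ fails
      have hc := Stmt8Aux.seqF_comp σ 1
      set l : Comp Stmt8Aux.P.toCGS 1 := ⟨Stmt8Aux.seqF σ 1, hc⟩ with hldef
      have hmem : l ∈ outSet Stmt8Aux.P.toCGS Set.univ 1 F := by
        intro k
        refine ⟨fun _ => σ (hist l.val k), ?_, ?_⟩
        · intro i hi
          have : i = 0 := Subsingleton.elim i 0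
          subst this
          rfl
        · show Stmt8Aux.seqF σ 1 (k + 1) =
            Stmt8Aux.step (Stmt8Aux.seqF σ 1 k) (σ (hist (Stmt8Aux.seqF σ 1) k))
          exact Stmt8Aux.seqF_succ σ 1 k
      have h1 : l.val 1 = 0 := by
        have := Stmt8Aux.seqF_succ σ 1 0
        rw [hist0 _ rfl] at this
        show Stmt8Aux.seqF σ 1 1 = 0
        rw [this, ha]
        rfl
      have := hout l hmem
      rw [h1] at this
      exact absurd this (by decide)
    · -- σ chooses 1 at [1]; then F 0 is dominated by the always-0 strategy
      have ha1 : σ [1] = 1 := by omega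
      refine hnd 0 (Set.mem_univ 0) ⟨Stmt8Aux.s0, ?_⟩
      intro t l hl l' hl'
      have key : ∀ (s : Strat Stmt8Aux.M 0) (m : Comp Stmt8Aux.P.toCGS 1),
          m ∈ outSet Stmt8Aux.P.toCGS Set.univ 1
            (combine Stmt8Aux.P.toCGS 0 s t) →
          m.val 1 = Stmt8Aux.step 1 (s.val [1]) := by
        intro s m hm
        obtain ⟨δ, hδ, hR⟩ := hm 0
        have hh : hist m.val 0 = [1] := hist0 _ m.2.1
        have hs : (combine Stmt8Aux.P.toCGS 0 s t 0 (Set.mem_univ 0)).val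
            (hist m.val 0) = δ 0 := hδ 0 (Set.mem_univ 0)
        have hcomb : combine Stmt8Aux.P.toCGS 0 s t 0 (Set.mem_univ 0) = s := rfl
        rw [hcomb, hh] at hs
        have : m.val 1 = Stmt8Aux.step (m.val 0) (δ 0) := hR
        rw [this, m.2.1, hs]
      have hl1 : l.val 1 = 1 := by rw [key _ l hl, ← hσ, ha1]; rfl
      have hl1' : l'.val 1 = 0 := by rw [key _ l' hl']; rfl
      constructor
      · show (if (1 : Fin 2) = 1 ∧ l.val 1 = 0 then 1 else 0 : ℕ) ≤
          (if (1 : Fin 2) = 1 ∧ l'.val 1 = 0 then 1 else 0 : ℕ)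
        rw [hl1, hl1']; simp
      · show ¬ ((if (1 : Fin 2) = 1 ∧ l'.val 1 = 0 then 1 else 0 : ℕ) ≤
          (if (1 : Fin 2) = 1 ∧ l.val 1 = 0 then 1 else 0 : ℕ))
        rw [hl1, hl1']; simp
end

section
/- The axiom A-Sup1 (superadditivity under rationality) is valid over all CGSPs: for disjoint coalitions C and C', if (P,w) ⊨ ⟨⟨C⟩⟩^r○φ and (P,w) ⊨ ⟨⟨C'⟩⟩^r○ψ, then (P,w) ⊨ ⟨⟨C∪C'⟩⟩^r○(φ∧ψ). -/
universe u v

variable {n : ℕ} {W : Type} {Act : Type}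

/-- A-Sup1: superadditivity under rationality. -/
theorem stmt_12 (P : CGSP n W Act) (C C' : Set (Fin n)) (hd : Disjoint C C')
    (φ ψ : W → Prop) (w : W)
    (h1 : RatCanNext P C φ w) (h2 : RatCanNext P C' ψ w) :
    RatCanNext P (C ∪ C') (fun v => φ v ∧ ψ v) w := by
  classical
  obtain ⟨F, hFnd, hFout⟩ := h1
  obtain ⟨F', hF'nd, hF'out⟩ := h2
  refine ⟨fun i hi => if h : i ∈ C then F i h else F' i (hi.resolve_left h), ?_, ?_⟩
  · intro i hi
    by_cases h : i ∈ C
    · simpa [h] using hFnd i h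
    · simpa [h] using hF'nd i (hi.resolve_left h)
  · intro l hl
    constructor
    · apply hFout l
      intro k
      obtain ⟨δ, hδ, hR⟩ := hl k
      refine ⟨δ, ?_, hR⟩
      intro i hiC
      have := hδ i (Or.inl hiC)
      simpa [hiC] using this
    · apply hF'out l
      intro k
      obtain ⟨δ, hδ, hR⟩ := hl k
      refine ⟨δ, ?_, hR⟩
      intro i hiC'
      have hniC : i ∉ C := fun hc => (hd.le_bot ⟨hc, hiC'⟩ : False)
      have := hδ i (Or.inr hiC')
      simpa [hniC] using this
end

section
/- The axiom A-DGRC (determinism of the grand coalition's rational choice) is valid over all CGSPs: if (P,w) ⊨ ⟨⟨AGT⟩⟩^r○(φ∨ψ) then (P,w) ⊨ ⟨⟨AGT⟩⟩^r○φ or (P,w) ⊨ ⟨⟨AGT⟩⟩^r○ψ. -/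
universe u v

variable {n : ℕ} {W : Type} {Act : Type}

/-- A-DGRC: determinism of the grand coalition's rational
collective choice. -/
theorem stmt_15 (P : CGSP n W Act) (φ ψ : W → Prop) (w : W)
    (h : RatCanNext P Set.univ (fun v => φ v ∨ ψ v) w) :
    RatCanNext P Set.univ φ w ∨ RatCanNext P Set.univ ψ w := by
  obtain ⟨F, hnd, hout⟩ := h
  have key : ∀ l ∈ outSet P.toCGS Set.univ w F, ∀ l' ∈ outSet P.toCGS Set.univ w F,
      ∀ k, l.val k = l'.val k := by
    intro l hl l' hl' k
    induction k using Nat.strong_induction_on with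
    | _ k ih =>
      cases k with
      | zero => rw [l.2.1, l'.2.1]
      | succ k =>
        obtain ⟨δ, hδ, hR⟩ := hl k
        obtain ⟨δ', hδ', hR'⟩ := hl' k
        have hhist : hist l.val k = hist l'.val k := by
          unfold hist
          congr 1
          funext j
          exact ih j (Nat.lt_succ_of_le (Nat.le_of_lt_succ j.2))
        have hδeq : δ = δ' := by
          funext i
          rw [← hδ i (Set.mem_univ i), ← hδ' i (Set.mem_univ i), hhist]
        have hk : l.val k = l'.val k := ih k (Nat.lt_succ_self k)
        subst hδeq
        exact P.toCGS.det δ (l.val k) _ _ hR (hk ▸ hR')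
  by_cases hne : ∃ l, l ∈ outSet P.toCGS Set.univ w F
  · obtain ⟨l, hl⟩ := hne
    rcases hout l hl with hφ | hψ
    · left
      exact ⟨F, hnd, fun l' hl' => (key l' hl' l hl 1) ▸ hφ⟩
    · right
      exact ⟨F, hnd, fun l' hl' => (key l' hl' l hl 1) ▸ hψ⟩
  · left
    exact ⟨F, hnd, fun l hl => absurd ⟨l, hl⟩ hne⟩
end

section
/- The crown axiom A-Cro is valid over all CGSPs: if (P,w) ⊨ ⟨⟨C⟩⟩○(φ∨ψ) then (P,w) ⊨ ⟨⟨C⟩⟩○φ or (P,w) ⊨ ⟨⟨AGT⟩⟩○ψ. -/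
universe u v

variable {n : ℕ} {W : Type} {Act : Type}

/-- A-Cro, the crown axiom. -/
theorem stmt_16 (M : CGS n W Act) (C : Set (Fin n)) (φ ψ : W → Prop) (w : W)
    (h : CanNext M C (fun v => φ v ∨ ψ v) w) :
    CanNext M C φ w ∨ CanNext M Set.univ ψ w := by
  classical
  obtain ⟨F, hF⟩ := h
  by_cases hall : ∀ l ∈ outSet M C w F, φ (l.val 1)
  · exact Or.inl ⟨F, hall⟩
  · right
    push_neg at hall
    obtain ⟨l, hl, hnφ⟩ := hall
    have hψ : ψ (l.val 1) := (hF l hl).resolve_left hnφ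
    have hR : ∃ δ, M.R δ w (l.val 1) := by
      have := l.2.2 0
      rwa [l.2.1] at this
    obtain ⟨δ₀, hδ₀⟩ := hR
    have hd : ∀ u : W, ∃ δ : Fin n → Act, ∃ v, M.R δ u v := by
      intro u; obtain ⟨δ, v, hv⟩ := M.serial u; exact ⟨δ, v, hv⟩
    choose d hdv using hd
    let σ : Fin n → List W → Act := fun i h =>
      if h = [w] then δ₀ i
        else if hne : h ≠ [] then d (h.getLast hne) i else δ₀ i
    have hval : ∀ i, σ i [w] = δ₀ i := fun i => if_pos rfl
    let strat : ∀ i : Fin n, Strat M i := fun i =>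
      ⟨σ i,
       by
        intro h hne hch
        by_cases hw : h = [w]
        · subst hw
          simp only [σ, if_pos rfl, List.getLast_singleton]
          exact ⟨δ₀, ⟨l.val 1, hδ₀⟩, rfl⟩
        · simp only [σ, if_neg hw, dif_pos hne]
          exact ⟨d (h.getLast hne), hdv _, rfl⟩⟩
    refine ⟨fun i _ => strat i, ?_⟩
    intro l' hl'
    obtain ⟨δ, hagree, hstep⟩ := hl' 0
    have hh : hist l'.val 0 = [w] := by
      simp [hist, List.ofFn_succ, List.ofFn_zero, l'.2.1]
    have hδ : δ = δ₀ := by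
      funext i
      have := hagree i trivial
      rw [hh] at this
      simp only [strat] at this
      rw [hval i] at this
      exact this.symm
    subst hδ
    rw [l'.2.1] at hstep
    have := M.det δ w _ _ hstep hδ₀
    rw [this]
    exact hψ
end

section
/- In a CGSP with short-sighted preferences, a strategy s of agent i is non-dominated at state w whenever its first action s(w) is a non-dominated action at w, where an action a of agent i is dominated at w if there exists an action a' of i available at w such that for every joint action δ of the other agents with both combined joint actions executable at w, the successor under δ⊕a is strictly ≺^succ_{i,w}-below the successor under δ⊕a'. -/
universe u v

variable {n : ℕ} {W : Type} {Act : Type}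

section Aux

variable {n : ℕ} {W : Type} {Act : Type}

lemma choice_nonempty (M : CGS n W Act) (j : Fin n) (u : W) :
    ∃ a, a ∈ M.choice j u := by
  obtain ⟨δ, v, h⟩ := M.serial u
  exact ⟨δ j, δ, ⟨v, h⟩, rfl⟩

/-- At a nonempty chain history, the joint action recommended by a grand
coalition strategy is executable. -/
lemma exists_step (M : CGS n W Act) (F : CStrat M (Set.univ : Set (Fin n)))
    (L : List W) (hne : L ≠ []) (hc : List.Chain' M.Rall L) :
    ∃ v, M.R (fun j => (F j (Set.mem_univ j)).val L) (L.getLast hne) v := by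
  apply M.indep
  intro j
  exact (F j (Set.mem_univ j)).2 L hne hc

/-- Histories generated by F from w, with prescribed first step to v. -/
noncomputable def gseq (M : CGS n W Act) (F : CStrat M (Set.univ : Set (Fin n)))
    (w v : W) (hv : M.Rall w v) :
    ℕ → {L : List W // L ≠ [] ∧ List.Chain' M.Rall L}
  | 0 => ⟨[w], by simp, List.isChain_singleton w⟩
  | 1 => ⟨[w, v], by simp, List.isChain_pair.2 hv⟩
  | (k + 2) =>
    let p := gseq M F w v hv (k + 1)
    let u := Classical.choose (exists_step M F p.1 p.2.1 p.2.2)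
    ⟨p.1 ++ [u], by simp, by
      refine List.isChain_append.2 ⟨p.2.2, List.isChain_singleton u, ?_⟩
      intro x hx y hy
      rw [List.getLast?_eq_getLast_of_ne_nil p.2.1, Option.mem_some_iff] at hx
      simp only [List.head?_cons, Option.mem_some_iff] at hy
      subst hx; subst hy
      exact ⟨_, Classical.choose_spec (exists_step M F p.1 p.2.1 p.2.2)⟩⟩

noncomputable def lseq (M : CGS n W Act) (F : CStrat M (Set.univ : Set (Fin n)))
    (w v : W) (hv : M.Rall w v) (k : ℕ) : W :=
  (gseq M F w v hv k).1.getLast (gseq M F w v hv k).2.1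

lemma getLast_append_singleton (L : List W) (x : W) (h : L ++ [x] ≠ []) :
    (L ++ [x]).getLast h = x := by
  simp

lemma lseq_zero (M : CGS n W Act) (F : CStrat M (Set.univ : Set (Fin n)))
    (w v : W) (hv : M.Rall w v) : lseq M F w v hv 0 = w := rfl

lemma lseq_one (M : CGS n W Act) (F : CStrat M (Set.univ : Set (Fin n)))
    (w v : W) (hv : M.Rall w v) : lseq M F w v hv 1 = v := rfl

lemma gseq_succ (M : CGS n W Act) (F : CStrat M (Set.univ : Set (Fin n)))
    (w v : W) (hv : M.Rall w v) (k : ℕ) :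
    (gseq M F w v hv (k + 1)).1
      = (gseq M F w v hv k).1 ++ [lseq M F w v hv (k + 1)] := by
  cases k with
  | zero => rfl
  | succ k =>
      show ((gseq M F w v hv (k+1)).1 ++ [_]) = _
      congr 1
      rw [lseq]
      congr 1
      exact (getLast_append_singleton _ _ _).symm

lemma hist_succ (l : ℕ → W) (k : ℕ) :
    hist l (k + 1) = hist l k ++ [l (k + 1)] := by
  unfold hist
  rw [List.ofFn_succ']
  simp [List.concat_eq_append]

lemma hist_eq_gseq (M : CGS n W Act) (F : CStrat M (Set.univ : Set (Fin n)))
    (w v : W) (hv : M.Rall w v) (k : ℕ) :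
    hist (lseq M F w v hv) k = (gseq M F w v hv k).1 := by
  induction k with
  | zero =>
      show List.ofFn _ = [w]
      simp [lseq_zero]
  | succ k ih =>
      rw [hist_succ, ih, gseq_succ]

lemma lseq_step (M : CGS n W Act) (F : CStrat M (Set.univ : Set (Fin n)))
    (w v : W) (hv : M.Rall w v) (k : ℕ) :
    M.R (fun j => (F j (Set.mem_univ j)).val (gseq M F w v hv (k + 1)).1)
      (lseq M F w v hv (k + 1)) (lseq M F w v hv (k + 2)) := by
  have h := Classical.choose_spec
    (exists_step M F (gseq M F w v hv (k+1)).1 (gseq M F w v hv (k+1)).2.1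
      (gseq M F w v hv (k+1)).2.2)
  have : lseq M F w v hv (k + 2)
      = Classical.choose (exists_step M F (gseq M F w v hv (k+1)).1
          (gseq M F w v hv (k+1)).2.1 (gseq M F w v hv (k+1)).2.2) := by
    rw [lseq]
    exact getLast_append_singleton _ _ _
  rw [this]
  exact h

/-- Main construction: there is an outcome of F through the prescribed
first transition. -/
lemma exists_outcome (M : CGS n W Act) (F : CStrat M (Set.univ : Set (Fin n)))
    (w v : W) (δ : Fin n → Act)
    (hδ : ∀ j, (F j (Set.mem_univ j)).val [w] = δ j)
    (hv : M.R δ w v) :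
    ∃ l ∈ outSet M Set.univ w F, l.val 1 = v := by
  have hRall : M.Rall w v := ⟨δ, hv⟩
  set l : ℕ → W := lseq M F w v hRall with hl
  have hsteps : ∀ k, ∃ δ' : Fin n → Act,
      (∀ j (hj : j ∈ (Set.univ : Set (Fin n))),
        (F j hj).val (hist l k) = δ' j) ∧ M.R δ' (l k) (l (k + 1)) := by
    intro k
    cases k with
    | zero =>
        refine ⟨δ, ?_, ?_⟩
        · intro j hj
          have : hist l 0 = [w] := hist_eq_gseq M F w v hRall 0
          rw [this]; exact hδ j
        · rw [hl, lseq_zero, lseq_one]; exact hv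
    | succ k =>
        refine ⟨fun j => (F j (Set.mem_univ j)).val (gseq M F w v hRall (k+1)).1,
          ?_, lseq_step M F w v hRall k⟩
        intro j hj
        rw [hist_eq_gseq]
  have hcomp : ∀ k, M.Rall (l k) (l (k + 1)) := by
    intro k
    obtain ⟨δ', _, h2⟩ := hsteps k
    exact ⟨δ', h2⟩
  refine ⟨⟨l, lseq_zero M F w v hRall, hcomp⟩, ?_, lseq_one M F w v hRall⟩
  exact hsteps

end Aux

/-- in a CGSP with short-sighted preferences, a strategy whose
first action is a non-dominated action at w is itself non-dominated at w. -/
theorem stmt_19 (P : CGSP n W Act) (hss : ShortSighted P) (i : Fin n)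
    (w : W) (s : Strat P.toCGS i)
    (h : ¬ ActionDominated P i w (s.val [w])) :
    ¬ Dominated P i w s := by
  classical
  rintro ⟨s', hdom⟩
  apply h
  obtain ⟨δw, hδw, _⟩ := P.toCGS.serial w
  have ha' : s'.val [w] ∈ P.toCGS.choice i w := by
    have := s'.2 [w] (by simp) (List.isChain_singleton w)
    simpa using this
  refine ⟨s'.val [w], ha', ?_⟩
  intro δ hδi v v' hv hv'
  -- the opponents' collective strategy realizing δ at the first step
  let t : CStrat P.toCGS ({i}ᶜ : Set (Fin n)) := fun j _ =>
    ⟨fun L => if L = [w] then δ j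
      else Classical.choose (choice_nonempty P.toCGS j ((L.getLast?).getD w)),
     by
       intro L hne hc
       by_cases hL : L = [w]
       · subst hL
         simp only [if_pos rfl]
         exact ⟨δ, ⟨v, hv⟩, rfl⟩
       · show (if L = [w] then δ j else _) ∈ _
         rw [if_neg hL]
         have hg : (L.getLast?).getD w = L.getLast hne := by
           rw [List.getLast?_eq_getLast_of_ne_nil hne]
           rfl
         rw [← hg]
         exact Classical.choose_spec
           (choice_nonempty P.toCGS j ((L.getLast?).getD w))⟩
  have htval : ∀ j (hj : j ≠ i),
      (t j (by simp [hj])).val [w] = δ j := by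
    intro j hj
    show (if ([w] : List W) = [w] then δ j else _) = δ j
    simp
  have hcomb_i : ∀ (σ : Strat P.toCGS i),
      combine P.toCGS i σ t i (Set.mem_univ i) = σ := by
    intro σ
    simp [combine]
  have hcomb_j : ∀ (σ : Strat P.toCGS i) j (hj : j ≠ i),
      combine P.toCGS i σ t j (Set.mem_univ j) = t j (by simp [hj]) := by
    intro σ j hj
    simp [combine, hj]
  obtain ⟨l, hl, hl1⟩ := exists_outcome P.toCGS (combine P.toCGS i s t) w v δ
    (by
      intro j
      by_cases hij : j = i
      · subst hij
        rw [hcomb_i, ← hδi]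
      · rw [hcomb_j s j hij, htval j hij]) hv
  obtain ⟨l', hl', hl1'⟩ := exists_outcome P.toCGS (combine P.toCGS i s' t) w v'
    (Function.update δ i (s'.val [w]))
    (by
      intro j
      by_cases hij : j = i
      · subst hij
        rw [hcomb_i, Function.update_self]
      · rw [hcomb_j s' j hij, htval j hij, Function.update_of_ne hij]) hv'
  exact ⟨l, l', hl1, hl1', hdom t l hl l' hl'⟩
end
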